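/- Let H be a complex separable Hilbert space and T a bounded operator on H with ‖T‖ ≤ 1 such that (T*)ⁿ v → 0 as n → ∞ for every v ∈ H. Let K be the closure of the range of I − T T* and let (e_i)_{i∈ι} be a Hilbert (orthonormal) basis of K. Then there exists a linearly independent family (v_i)_{i∈ι} in H such that {Tⁿ v_i : i ∈ ι, n ≥ 0} is a Parseval frame of H. In particular, the Parseval frame index γ_p(T) equals the Hilbert dimension of K and is attained with linearly independent generators. -/

import Mathlib

open scoped ComplexInnerProductSpace

set_option maxHeartbeats 1000000
set_option synthInstance.maxHeartbeats 1000000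

/-- Let `T` be a contraction with strongly stable adjoint, `K` the
closure of the range of `I − T T*` (the defect space) and `(eᵢ)_{i ∈ ι}` a Hilbert
basis of `K`. Then there is a linearly independent family `(vᵢ)_{i ∈ ι}` whose
iterates `{Tⁿ vᵢ}` form a Parseval frame of `H`; in particular the Parseval frame
index is attained, with linearly independent generators, by a family indexed by a
Hilbert basis of the defect space. -/
theorem parseval_index_attained_linearly_independent
    (H : Type*) [NormedAddCommGroup H] [InnerProductSpace ℂ H]
    [CompleteSpace H] [TopologicalSpace.SeparableSpace H]
    (T : H →L[ℂ] H) (hT : ‖T‖ ≤ 1)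
    (hstable : ∀ v : H,
      Filter.Tendsto (fun n : ℕ => ((ContinuousLinearMap.adjoint T) ^ n) v)
        Filter.atTop (nhds 0))
    (K : Submodule ℂ H)
    (hK : K = (LinearMap.range (((1 - T * ContinuousLinearMap.adjoint T : H →L[ℂ] H) : H →ₗ[ℂ] H))).topologicalClosure)
    [CompleteSpace K]
    {ι : Type*} (e : HilbertBasis ι ℂ K) :
    ∃ v : ι → H, LinearIndependent ℂ v ∧
      ∀ x : H, ∑' p : ι × ℕ, ‖⟪x, (T ^ p.2) (v p.1)⟫‖ ^ 2 = ‖x‖ ^ 2 := by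
  classical
  set S : H →L[ℂ] H := ContinuousLinearMap.adjoint T with hS
  set A : H →L[ℂ] H := 1 - T * S with hA
  have hAsa : IsSelfAdjoint A := by
    rw [hA]
    simp only [IsSelfAdjoint, star_sub, star_mul, star_one,
      ContinuousLinearMap.star_eq_adjoint, hS, ContinuousLinearMap.adjoint_adjoint]
  have hSnorm : ∀ x : H, ‖S x‖ ≤ ‖x‖ := by
    intro x
    have h1 : ‖S‖ = ‖T‖ := ContinuousLinearMap.adjoint.norm_map T
    calc ‖S x‖ ≤ ‖S‖ * ‖x‖ := S.le_opNorm x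
    _ ≤ 1 * ‖x‖ := mul_le_mul_of_nonneg_right (by rw [h1]; exact hT) (norm_nonneg x)
    _ = ‖x‖ := one_mul _
  have hAinner : ∀ x : H, ⟪x, A x⟫ = ((‖x‖ ^ 2 - ‖S x‖ ^ 2 : ℝ) : ℂ) := by
    intro x
    have h1 : A x = x - T (S x) := by
      simp [hA, ContinuousLinearMap.sub_apply, ContinuousLinearMap.mul_apply]
    have h2 : ⟪x, T (S x)⟫ = ⟪S x, S x⟫ := by
      rw [hS]
      exact (ContinuousLinearMap.adjoint_inner_left T (S x) x).symm
    rw [h1, inner_sub_right, h2, inner_self_eq_norm_sq_to_K, inner_self_eq_norm_sq_to_K]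
    norm_cast
  have hApos : (0 : H →L[ℂ] H) ≤ A := by
    rw [ContinuousLinearMap.nonneg_iff_isPositive]
    refine ⟨ContinuousLinearMap.isSelfAdjoint_iff_isSymmetric.mp hAsa, fun x => ?_⟩
    have h0 : 0 ≤ ‖x‖ ^ 2 - ‖S x‖ ^ 2 := by
      have := hSnorm x
      nlinarith [norm_nonneg (S x), norm_nonneg x]
    have h1 : ContinuousLinearMap.reApplyInnerSelf A x = Complex.re ⟪A x, x⟫ := rfl
    rw [h1, ← Complex.conj_re, inner_conj_symm, hAinner x, Complex.ofReal_re]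
    exact h0
  set D : H →L[ℂ] H := CFC.sqrt A with hD
  have hDmul : D * D = A := CFC.sqrt_mul_sqrt_self A hApos
  have hDpos : (0 : H →L[ℂ] H) ≤ D := CFC.sqrt_nonneg A
  have hDsa : IsSelfAdjoint D :=
    ((ContinuousLinearMap.nonneg_iff_isPositive D).mp hDpos).isSelfAdjoint
  have hDadj : ContinuousLinearMap.adjoint D = D := by
    rw [← ContinuousLinearMap.star_eq_adjoint]; exact hDsa
  have hAadj : ContinuousLinearMap.adjoint A = A := by
    rw [← ContinuousLinearMap.star_eq_adjoint]; exact hAsa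
  have hDin : ∀ a b : H, ⟪D a, b⟫ = ⟪a, D b⟫ := by
    intro a b
    conv_lhs => rw [← hDadj]
    exact ContinuousLinearMap.adjoint_inner_left D b a
  have hAin : ∀ a b : H, ⟪A a, b⟫ = ⟪a, A b⟫ := by
    intro a b
    conv_lhs => rw [← hAadj]
    exact ContinuousLinearMap.adjoint_inner_left A b a
  have hDsq : ∀ x : H, ‖D x‖ ^ 2 = ‖x‖ ^ 2 - ‖S x‖ ^ 2 := by
    intro x
    have h1 : D (D x) = A x := by rw [← ContinuousLinearMap.mul_apply, hDmul]
    have h2 : (⟪D x, D x⟫ : ℂ) = ((‖x‖ ^ 2 - ‖S x‖ ^ 2 : ℝ) : ℂ) := by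
      rw [hDin x (D x), h1, hAinner x]
    have h3 := inner_self_eq_norm_sq_to_K (𝕜 := ℂ) (D x)
    rw [h3] at h2
    have h4 := congrArg Complex.re h2
    simpa [← Complex.ofReal_pow, ← RCLike.ofReal_pow, RCLike.ofReal_re] using h4
  -- the defect space
  have hKo : K = (LinearMap.range (A : H →ₗ[ℂ] H))ᗮᗮ := by
    rw [hK, ← Submodule.orthogonal_orthogonal_eq_closure]
  have hkerA : ∀ z : H, z ∈ (LinearMap.range (A : H →ₗ[ℂ] H))ᗮ → A z = 0 := by
    intro z hz
    have h1 : ∀ w : H, ⟪w, A z⟫ = 0 := by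
      intro w
      rw [← hAin w z]
      exact (Submodule.mem_orthogonal _ z).mp hz (A w) ⟨w, rfl⟩
    have := h1 (A z)
    rwa [inner_self_eq_zero] at this
  have hkerD : ∀ z : H, A z = 0 → D z = 0 := by
    intro z hz
    have h1 : (⟪D z, D z⟫ : ℂ) = 0 := by
      rw [hDin z (D z), ← ContinuousLinearMap.mul_apply, hDmul, hz, inner_zero_right]
    rwa [inner_self_eq_zero] at h1
  have hmemK : ∀ y : H, D y ∈ K := by
    intro y
    rw [hKo, Submodule.mem_orthogonal]
    intro z hz
    have hz0 : D z = 0 := hkerD z (hkerA z hz)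
    rw [← hDin z y, hz0, inner_zero_left]
  have hinj : ∀ x : H, x ∈ K → D x = 0 → x = 0 := by
    intro x hxK hDx
    have hAx : A x = 0 := by rw [← hDmul, ContinuousLinearMap.mul_apply, hDx, map_zero]
    have hxo : x ∈ (LinearMap.range (A : H →ₗ[ℂ] H))ᗮ := by
      rw [Submodule.mem_orthogonal]
      rintro u ⟨w, rfl⟩
      rw [ContinuousLinearMap.coe_coe, hAin w x, hAx, inner_zero_right]
    rw [hKo] at hxK
    have := (Submodule.mem_orthogonal _ x).mp hxK x hxo
    rwa [inner_self_eq_zero] at this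
  -- the generators
  set v : ι → H := fun i => D ((e i : K) : H) with hv
  have hone : Orthonormal ℂ (fun i => ((e i : K) : H)) :=
    e.orthonormal.comp_linearIsometry K.subtypeₗᵢ
  have hliv : LinearIndependent ℂ v := by
    have hdis : Disjoint (Submodule.span ℂ (Set.range fun i => ((e i : K) : H)))
        (LinearMap.ker (D : H →ₗ[ℂ] H)) := by
      rw [Submodule.disjoint_def]
      intro x hxspan hxker
      have hle : Submodule.span ℂ (Set.range fun i => ((e i : K) : H)) ≤ K := by
        rw [Submodule.span_le]
        rintro _ ⟨i, rfl⟩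
        exact (e i).2
      exact hinj x (hle hxspan) (by simpa using hxker)
    exact hone.linearIndependent.map hdis
  refine ⟨v, hliv, fun x => ?_⟩
  -- Parseval identity
  have hadj_pow : ∀ n : ℕ, ContinuousLinearMap.adjoint (T ^ n) = S ^ n := by
    intro n
    rw [← ContinuousLinearMap.star_eq_adjoint, star_pow, ContinuousLinearMap.star_eq_adjoint, hS]
  set f : ℕ → ℝ := fun n => ‖D ((S ^ n) x)‖ ^ 2 with hf
  have hfeq : ∀ n, f n = ‖(S ^ n) x‖ ^ 2 - ‖(S ^ (n + 1)) x‖ ^ 2 := by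
    intro n
    have h1 : (S ^ (n + 1)) x = S ((S ^ n) x) := by
      rw [pow_succ']; rfl
    show ‖D ((S ^ n) x)‖ ^ 2 = _
    rw [hDsq ((S ^ n) x), h1]
  have hf_nonneg : ∀ n, 0 ≤ f n := fun n => sq_nonneg _
  have hgtend : Filter.Tendsto (fun n => ‖(S ^ n) x‖ ^ 2) Filter.atTop (nhds 0) := by
    have h1 := (hstable x).norm
    rw [norm_zero] at h1
    have h2 := h1.pow 2
    simpa using h2
  have hfsum : HasSum f (‖x‖ ^ 2) := by
    rw [hasSum_iff_tendsto_nat_of_nonneg hf_nonneg]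
    have hpart : ∀ n, ∑ k ∈ Finset.range n, f k = ‖x‖ ^ 2 - ‖(S ^ n) x‖ ^ 2 := by
      intro n
      calc ∑ k ∈ Finset.range n, f k
          = ∑ k ∈ Finset.range n, (‖(S ^ k) x‖ ^ 2 - ‖(S ^ (k + 1)) x‖ ^ 2) :=
            Finset.sum_congr rfl fun k _ => hfeq k
        _ = ‖(S ^ 0) x‖ ^ 2 - ‖(S ^ n) x‖ ^ 2 := Finset.sum_range_sub' _ n
        _ = ‖x‖ ^ 2 - ‖(S ^ n) x‖ ^ 2 := by rw [pow_zero]; rfl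
    simp_rw [hpart]
    simpa using Filter.Tendsto.sub (tendsto_const_nhds (x := ‖x‖ ^ 2)) hgtend
  -- per-n sums
  have hn : ∀ n : ℕ, HasSum (fun i => ‖⟪x, (T ^ n) (v i)⟫‖ ^ 2) (f n) := by
    intro n
    set W : K := ⟨D ((S ^ n) x), hmemK _⟩ with hW
    have hWi : ∀ i, ⟪x, (T ^ n) (v i)⟫ = ⟪W, e i⟫ := by
      intro i
      have h1 : ⟪x, (T ^ n) (v i)⟫ = ⟪(S ^ n) x, D ((e i : K) : H)⟫ := by
        rw [← hadj_pow n]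
        exact (ContinuousLinearMap.adjoint_inner_left (T ^ n) (v i) x).symm
      rw [h1, ← hDin ((S ^ n) x) ((e i : K) : H)]
      exact (Submodule.coe_inner K W (e i)).symm
    have h1 := e.hasSum_inner_mul_inner W W
    have h2 : ∀ i, (⟪W, e i⟫ * ⟪e i, W⟫) = ((‖⟪x, (T ^ n) (v i)⟫‖ ^ 2 : ℝ) : ℂ) := by
      intro i
      rw [← inner_conj_symm (e i) W, RCLike.mul_conj, hWi i]
      norm_cast
    have h3 : (⟪W, W⟫) = ((f n : ℝ) : ℂ) := by
      rw [inner_self_eq_norm_sq_to_K]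
      norm_cast
    rw [funext h2, h3] at h1
    have h4 := Complex.reCLM.hasSum h1
    simpa only [Complex.reCLM_apply, Complex.ofReal_re] using h4
  -- assemble over the product
  set F : ι × ℕ → ℝ := fun p => ‖⟪x, (T ^ p.2) (v p.1)⟫‖ ^ 2 with hF
  set G : ℕ × ι → ℝ := fun q => F (q.2, q.1) with hG
  have hGsummable : Summable G := by
    rw [summable_prod_of_nonneg (fun q => sq_nonneg _)]
    constructor
    · intro n; exact (hn n).summable
    · have h1 : (fun n => ∑' i, G (n, i)) = f := funext fun n => (hn n).tsum_eq
      rw [h1]; exact hfsum.summable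
  calc ∑' p : ι × ℕ, F p = ∑' q : ℕ × ι, G q := (Equiv.prodComm ι ℕ).tsum_eq G
    _ = ∑' n, ∑' i, G (n, i) := hGsummable.tsum_prod' fun n => (hn n).summable
    _ = ∑' n, f n := tsum_congr fun n => (hn n).tsum_eq
    _ = ‖x‖ ^ 2 := hfsum.tsum_eq
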